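/- arXiv:2411.04506 — 4 statements merged into one kernel-verified Lean document; each statement's English description precedes it below -/
import Mathlib

section
/- Let A ∈ ℂ^{m×n}, L ∈ {0,1}^{m×r} and R ∈ {0,1}^{r×n}. Assume that the rank-one contribution supports U_1, …, U_r of (L, R) are pairwise either identical or disjoint. Then inf{ ‖A − XY‖_F² : X ∈ ℂ^{m×r}, Y ∈ ℂ^{r×n}, X[i,k] = 0 whenever L[i,k] = 0, Y[k,j] = 0 whenever R[k,j] = 0 } = Σ_{P ∈ P(L,R)} min{ ‖A[R_P, C_P] − B‖_F² : B of size |R_P|×|C_P| with rank(B) ≤ |P| } + Σ_{(i,j) : (L·R)[i,j] = 0} |A[i,j]|², and this infimum is attained. -/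
/-- The rank-one contribution support `U_k = L[:,k] ⬝ R[k,:]` of binary matrices `(L, R)`. -/
def contrib {m r n : ℕ} (L : Matrix (Fin m) (Fin r) ℕ) (R : Matrix (Fin r) (Fin n) ℕ)
    (k : Fin r) : Matrix (Fin m) (Fin n) ℕ :=
  Matrix.of fun i j => L i k * R k j

open scoped Classical in
/-- The equivalence classes `P(L,R)` of the relation `k ∼ k' ↔ U_k = U_k'` on `Fin r`. -/
noncomputable def classes {m r n : ℕ} (L : Matrix (Fin m) (Fin r) ℕ)
    (R : Matrix (Fin r) (Fin n) ℕ) : Finset (Finset (Fin r)) :=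
  Finset.image (fun k => Finset.univ.filter fun k' => contrib L R k' = contrib L R k)
    Finset.univ

open scoped Classical in
/-- `R_P`: the set of indices of nonzero rows of the common rank-one support of `P`. -/
noncomputable def rowSupp {m r n : ℕ} (L : Matrix (Fin m) (Fin r) ℕ)
    (R : Matrix (Fin r) (Fin n) ℕ) (P : Finset (Fin r)) : Finset (Fin m) :=
  Finset.univ.filter fun i => ∃ k ∈ P, ∃ j, contrib L R k i j ≠ 0

open scoped Classical in
/-- `C_P`: the set of indices of nonzero columns of the common rank-one support of `P`. -/
noncomputable def colSupp {m r n : ℕ} (L : Matrix (Fin m) (Fin r) ℕ)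
    (R : Matrix (Fin r) (Fin n) ℕ) (P : Finset (Fin r)) : Finset (Fin n) :=
  Finset.univ.filter fun j => ∃ k ∈ P, ∃ i, contrib L R k i j ≠ 0

/-- Squared Frobenius norm. -/
noncomputable def frobSq {α β : Type*} [Fintype α] [Fintype β] (A : Matrix α β ℂ) : ℝ :=
  ∑ i, ∑ j, ‖A i j‖ ^ 2

/-- The submatrix `A[Rs, Cs]`. -/
def subm {m n : ℕ} (A : Matrix (Fin m) (Fin n) ℂ) (Rs : Finset (Fin m))
    (Cs : Finset (Fin n)) : Matrix Rs Cs ℂ :=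
  Matrix.of fun i j => A i.1 j.1

lemma frobSq_nonneg {α β : Type*} [Fintype α] [Fintype β] (A : Matrix α β ℂ) : 0 ≤ frobSq A :=
  Finset.sum_nonneg fun _ _ => Finset.sum_nonneg fun _ _ => by positivity

lemma entry_norm_le {ι : Type*} [Fintype ι] (x : EuclideanSpace ℂ ι) (i : ι) : ‖x i‖ ≤ ‖x‖ := by
  rw [EuclideanSpace.norm_eq]
  have h1 : ‖x i‖ ^ 2 ≤ ∑ j, ‖x j‖ ^ 2 :=
    Finset.single_le_sum (f := fun j => ‖x j‖ ^ 2) (fun _ _ => by positivity) (Finset.mem_univ i)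
  calc ‖x i‖ = Real.sqrt (‖x i‖ ^ 2) := by rw [Real.sqrt_sq (norm_nonneg _)]
    _ ≤ _ := Real.sqrt_le_sqrt h1

open scoped InnerProductSpace in
lemma span_factor {E : Type*} [NormedAddCommGroup E] [InnerProductSpace ℂ E]
    [FiniteDimensional ℂ E] {κ : Type*} (p : ℕ) (v : κ → E)
    (h : Module.finrank ℂ (Submodule.span ℂ (Set.range v)) ≤ p) :
    ∃ c : Fin p → E, (∀ k, ‖c k‖ ≤ 1) ∧ ∀ j, ∑ k, (⟪c k, v j⟫_ℂ) • c k = v j := by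
  classical
  set W := Submodule.span ℂ (Set.range v) with hWdef
  set q := Module.finrank ℂ W with hq
  let b := stdOrthonormalBasis ℂ W
  refine ⟨fun k => if hk : (k : ℕ) < q then (b ⟨k, hk⟩ : E) else 0, fun k => ?_, fun j => ?_⟩
  · beta_reduce
    by_cases hk : (k : ℕ) < q
    · rw [dif_pos hk, Submodule.norm_coe]
      exact le_of_eq (b.orthonormal.1 _)
    · rw [dif_neg hk]; simp
  · have hmem : v j ∈ W := Submodule.subset_span (Set.mem_range_self j)
    have hmap : (Finset.univ : Finset (Fin q)).map (Fin.castLEEmb h) ⊆ Finset.univ :=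
      Finset.subset_univ _
    rw [← Finset.sum_subset hmap (by
      intro k _ hk
      have hnk : ¬ (k : ℕ) < q := fun hlt =>
        hk (Finset.mem_map.mpr ⟨⟨k, hlt⟩, Finset.mem_univ _, Fin.ext rfl⟩)
      beta_reduce
      rw [dif_neg hnk]; simp)]
    rw [Finset.sum_map]
    have hterm : ∀ k' : Fin q,
        (⟪(fun k => if hk : (k : ℕ) < q then (b ⟨k, hk⟩ : E) else 0) ((Fin.castLEEmb h) k'), v j⟫_ℂ)
          • (fun k => if hk : (k : ℕ) < q then (b ⟨k, hk⟩ : E) else 0) ((Fin.castLEEmb h) k')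
        = ((⟪b k', (⟨v j, hmem⟩ : W)⟫_ℂ • b k' : W) : E) := by
      intro k'
      have hlt : ((Fin.castLEEmb h) k' : ℕ) < q := k'.isLt
      beta_reduce
      simp only [dif_pos hlt]
      have hbk : (⟨(((Fin.castLEEmb h) k' : Fin p) : ℕ), hlt⟩ : Fin q) = k' := Fin.ext rfl
      rw [hbk, Submodule.coe_smul, Submodule.coe_inner]
    rw [Finset.sum_congr rfl (fun k' _ => hterm k'), ← Submodule.coe_sum,
      b.sum_repr' ⟨v j, hmem⟩]

open scoped InnerProductSpace in
lemma rank_factor {ι κ : Type*} [Fintype ι] [Fintype κ] (B : Matrix ι κ ℂ) (p : ℕ)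
    (hrank : B.rank ≤ p) :
    ∃ (C : Matrix ι (Fin p) ℂ) (D : Matrix (Fin p) κ ℂ),
      (∀ i k, ‖C i k‖ ≤ 1) ∧ (∀ k j, ‖D k j‖ ≤ Real.sqrt (frobSq B)) ∧ C * D = B := by
  classical
  let e : (ι → ℂ) ≃ₗ[ℂ] EuclideanSpace ℂ ι := (WithLp.linearEquiv 2 ℂ (ι → ℂ)).symm
  let col : κ → EuclideanSpace ℂ ι := fun j => e (fun i => B i j)
  have hspan : Module.finrank ℂ (Submodule.span ℂ (Set.range col)) ≤ p := by
    have h1 : Set.range col = (e : (ι → ℂ) →ₗ[ℂ] EuclideanSpace ℂ ι) '' (Set.range B.transpose) := by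
      exact Set.range_comp _ _
    rw [h1, ← Submodule.map_span, LinearEquiv.finrank_map_eq]
    exact le_trans (le_of_eq (Matrix.rank_eq_finrank_span_cols B).symm) hrank
  obtain ⟨c, hcnorm, hsum⟩ := span_factor p col hspan
  have hcolnorm : ∀ j, ‖col j‖ ≤ Real.sqrt (frobSq B) := by
    intro j
    rw [EuclideanSpace.norm_eq]
    apply Real.sqrt_le_sqrt
    refine Finset.sum_le_sum fun i _ => ?_
    show ‖B i j‖ ^ 2 ≤ _
    exact Finset.single_le_sum (f := fun j' => ‖B i j'‖ ^ 2) (fun _ _ => by positivity)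
      (Finset.mem_univ j)
  refine ⟨Matrix.of fun i k => c k i, Matrix.of fun k j => ⟪c k, col j⟫_ℂ, ?_, ?_, ?_⟩
  · intro i k
    exact le_trans (entry_norm_le (c k) i) (hcnorm k)
  · intro k j
    calc ‖(⟪c k, col j⟫_ℂ)‖ ≤ ‖c k‖ * ‖col j‖ := norm_inner_le_norm _ _
      _ ≤ 1 * Real.sqrt (frobSq B) :=
          mul_le_mul (hcnorm k) (hcolnorm j) (norm_nonneg _) zero_le_one
      _ = _ := one_mul _
  · ext i j
    have h := congrArg (fun v => e.symm v i) (hsum j)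
    simp only [map_sum, map_smul] at h
    rw [Finset.sum_apply] at h
    simp only [Pi.smul_apply, smul_eq_mul] at h
    rw [Matrix.mul_apply]
    have h2 : ∀ k, Matrix.of (fun i k => c k i) i k * Matrix.of (fun k j => (⟪c k, col j⟫_ℂ)) k j
        = (⟪c k, col j⟫_ℂ) * e.symm (c k) i := fun k => by
      rw [Matrix.of_apply, Matrix.of_apply, mul_comm]; rfl
    rw [Finset.sum_congr rfl fun k _ => h2 k, h]
    show e.symm (e fun i' => B i' j) i = B i j
    rw [e.symm_apply_apply]

lemma exists_best_rank_approx {ι κ : Type*} [Fintype ι] [Fintype κ]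
    (M : Matrix ι κ ℂ) (p : ℕ) :
    ∃ B : Matrix ι κ ℂ, B.rank ≤ p ∧
      IsLeast {e : ℝ | ∃ B' : Matrix ι κ ℂ, B'.rank ≤ p ∧ e = frobSq (M - B')}
        (frobSq (M - B)) := by
  classical
  set c₂ := Real.sqrt (4 * frobSq M) with hc₂
  let f : (ι → Fin p → ℂ) × (Fin p → κ → ℂ) → ℝ :=
    fun z => ∑ i, ∑ j, ‖M i j - ∑ k, z.1 i k * z.2 k j‖ ^ 2
  have hfe : ∀ z, f z = frobSq (M - Matrix.of z.1 * Matrix.of z.2) := by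
    intro z
    simp [f, frobSq, Matrix.sub_apply, Matrix.mul_apply]
  have hf : Continuous f := by
    apply continuous_finset_sum; intro i _
    apply continuous_finset_sum; intro j _
    have h1 : Continuous fun z : (ι → Fin p → ℂ) × (Fin p → κ → ℂ) =>
        M i j - ∑ k, z.1 i k * z.2 k j := by
      apply Continuous.sub continuous_const
      apply continuous_finset_sum; intro k _
      fun_prop
    exact h1.norm.pow 2
  set K : Set ((ι → Fin p → ℂ) × (Fin p → κ → ℂ)) :=
    Metric.closedBall 0 1 ×ˢ Metric.closedBall 0 c₂ with hK
  have hKc : IsCompact K :=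
    (isCompact_closedBall _ _).prod (isCompact_closedBall _ _)
  have h0K : ((0, 0) : (ι → Fin p → ℂ) × (Fin p → κ → ℂ)) ∈ K :=
    Set.mem_prod.mpr ⟨Metric.mem_closedBall_self zero_le_one,
      Metric.mem_closedBall_self (Real.sqrt_nonneg _)⟩
  obtain ⟨z₀, hz₀K, hmin⟩ := hKc.exists_isMinOn ⟨_, h0K⟩ hf.continuousOn
  refine ⟨Matrix.of z₀.1 * Matrix.of z₀.2, ?_, ⟨_, ?_, (hfe z₀).symm⟩, ?_⟩
  · exact le_trans (Matrix.rank_mul_le_right _ _)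
      (le_trans (Matrix.rank_le_card_height _) (le_of_eq (Fintype.card_fin p)))
  · exact le_trans (Matrix.rank_mul_le_right _ _)
      (le_trans (Matrix.rank_le_card_height _) (le_of_eq (Fintype.card_fin p)))
  · rintro e ⟨B', hB', rfl⟩
    rw [← hfe z₀]
    by_cases hcase : frobSq (M - B') ≤ frobSq M
    · -- B' is bounded
      have hBb : frobSq B' ≤ 4 * frobSq M := by
        have hentry : ∀ i j, ‖B' i j‖ ^ 2 ≤ 2 * ‖(M - B') i j‖ ^ 2 + 2 * ‖M i j‖ ^ 2 := by
          intro i j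
          have h3 : ‖B' i j‖ ≤ ‖(M - B') i j‖ + ‖M i j‖ := by
            calc ‖B' i j‖ = ‖M i j - (M - B') i j‖ := by
                  rw [Matrix.sub_apply]; ring_nf
              _ ≤ ‖M i j‖ + ‖(M - B') i j‖ := norm_sub_le _ _
              _ = _ := by ring
          calc ‖B' i j‖ ^ 2 ≤ (‖(M - B') i j‖ + ‖M i j‖) ^ 2 := by
                apply pow_le_pow_left₀ (norm_nonneg _) h3
            _ ≤ 2 * ‖(M - B') i j‖ ^ 2 + 2 * ‖M i j‖ ^ 2 := by nlinarith [sq_nonneg (‖(M - B') i j‖ - ‖M i j‖)]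
        calc frobSq B' ≤ ∑ i, ∑ j, (2 * ‖(M - B') i j‖ ^ 2 + 2 * ‖M i j‖ ^ 2) := by
              refine Finset.sum_le_sum fun i _ => Finset.sum_le_sum fun j _ => hentry i j
          _ = 2 * frobSq (M - B') + 2 * frobSq M := by
              simp [frobSq, Finset.sum_add_distrib, Finset.mul_sum]
          _ ≤ 4 * frobSq M := by linarith
      obtain ⟨C, D, hCb, hDb, hCD⟩ := rank_factor B' p hB'
      have hzK : ((C, D) : (ι → Fin p → ℂ) × (Fin p → κ → ℂ)) ∈ K := by
        constructor
        · rw [Metric.mem_closedBall, dist_zero_right]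
          refine pi_norm_le_iff_of_nonneg zero_le_one |>.mpr fun i => ?_
          exact pi_norm_le_iff_of_nonneg zero_le_one |>.mpr fun k => hCb i k
        · rw [Metric.mem_closedBall, dist_zero_right]
          refine pi_norm_le_iff_of_nonneg (Real.sqrt_nonneg _) |>.mpr fun k => ?_
          refine pi_norm_le_iff_of_nonneg (Real.sqrt_nonneg _) |>.mpr fun j => ?_
          exact le_trans (hDb k j) (Real.sqrt_le_sqrt hBb)
      have h5 : f z₀ ≤ f (C, D) := hmin hzK
      rw [hfe (C, D)] at h5
      calc f z₀ ≤ frobSq (M - Matrix.of (C, D).1 * Matrix.of (C, D).2) := h5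
        _ = frobSq (M - B') := by rw [show Matrix.of (C, D).1 * Matrix.of (C, D).2 = C * D from rfl, hCD]
    · have h00 : f z₀ ≤ f (0, 0) := hmin h0K
      rw [hfe (0, 0)] at h00
      have : frobSq (M - Matrix.of (0 : ι → Fin p → ℂ) * Matrix.of (0 : Fin p → κ → ℂ)) = frobSq M := by
        congr 1
        ext i j
        simp [Matrix.mul_apply]
      rw [this] at h00
      linarith [le_of_not_ge hcase]

-- ## auxiliary combinatorial lemmas

open scoped Classical in
noncomputable def Pcls {m r n : ℕ} (L : Matrix (Fin m) (Fin r) ℕ)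
    (R : Matrix (Fin r) (Fin n) ℕ) (k : Fin r) : Finset (Fin r) :=
  Finset.univ.filter fun k' => contrib L R k' = contrib L R k

variable {m r n : ℕ} {L : Matrix (Fin m) (Fin r) ℕ} {R : Matrix (Fin r) (Fin n) ℕ}

lemma classes_eq : classes L R = Finset.image (Pcls L R) Finset.univ := rfl

lemma mem_Pcls {k k' : Fin r} : k' ∈ Pcls L R k ↔ contrib L R k' = contrib L R k := by
  simp [Pcls]

lemma self_mem_Pcls (k : Fin r) : k ∈ Pcls L R k := mem_Pcls.mpr rfl

lemma Pcls_eq_of {k k' : Fin r} (h : contrib L R k' = contrib L R k) :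
    Pcls L R k' = Pcls L R k := by
  ext a; simp only [mem_Pcls, h]

lemma Pcls_eq_of_mem {k k' : Fin r} (h : k' ∈ Pcls L R k) : Pcls L R k' = Pcls L R k :=
  Pcls_eq_of (mem_Pcls.mp h)

lemma mem_classes_iff {P : Finset (Fin r)} : P ∈ classes L R ↔ ∃ k, Pcls L R k = P := by
  rw [classes_eq]
  simp [Finset.mem_image, Pcls]

lemma mem_rowSupp_Pcls {k : Fin r} {i : Fin m} :
    i ∈ rowSupp L R (Pcls L R k) ↔ ∃ j, contrib L R k i j ≠ 0 := by
  simp only [rowSupp, Finset.mem_filter, Finset.mem_univ, true_and]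
  constructor
  · rintro ⟨k', hk', j, hj⟩
    exact ⟨j, by rwa [mem_Pcls.mp hk'] at hj⟩
  · rintro ⟨j, hj⟩
    exact ⟨k, self_mem_Pcls k, j, hj⟩

lemma mem_colSupp_Pcls {k : Fin r} {j : Fin n} :
    j ∈ colSupp L R (Pcls L R k) ↔ ∃ i, contrib L R k i j ≠ 0 := by
  simp only [colSupp, Finset.mem_filter, Finset.mem_univ, true_and]
  constructor
  · rintro ⟨k', hk', i, hi⟩
    exact ⟨i, by rwa [mem_Pcls.mp hk'] at hi⟩
  · rintro ⟨i, hi⟩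
    exact ⟨k, self_mem_Pcls k, i, hi⟩

lemma key_iff {k : Fin r} {i : Fin m} {j : Fin n} :
    contrib L R k i j ≠ 0 ↔ i ∈ rowSupp L R (Pcls L R k) ∧ j ∈ colSupp L R (Pcls L R k) := by
  constructor
  · intro h
    exact ⟨mem_rowSupp_Pcls.mpr ⟨j, h⟩, mem_colSupp_Pcls.mpr ⟨i, h⟩⟩
  · rintro ⟨hi, hj⟩
    obtain ⟨j', hj'⟩ := mem_rowSupp_Pcls.mp hi
    obtain ⟨i', hi'⟩ := mem_colSupp_Pcls.mp hj
    have hL : L i k ≠ 0 := fun h0 => hj' (by simp [contrib, h0])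
    have hR : R k j ≠ 0 := fun h0 => hi' (by simp [contrib, h0])
    simp only [contrib, Matrix.of_apply, ne_eq, Nat.mul_eq_zero]
    tauto

lemma rowSupp_L_ne {k : Fin r} {i : Fin m} (h : i ∈ rowSupp L R (Pcls L R k)) : L i k ≠ 0 := by
  obtain ⟨j, hj⟩ := mem_rowSupp_Pcls.mp h
  exact fun h0 => hj (by simp [contrib, h0])

lemma colSupp_R_ne {k : Fin r} {j : Fin n} (h : j ∈ colSupp L R (Pcls L R k)) : R k j ≠ 0 := by
  obtain ⟨i, hi⟩ := mem_colSupp_Pcls.mp h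
  exact fun h0 => hi (by simp [contrib, h0])

lemma LR_apply (i : Fin m) (j : Fin n) : (L * R) i j = ∑ k, contrib L R k i j := by
  rw [Matrix.mul_apply]; rfl

lemma LR_eq_zero_iff {i : Fin m} {j : Fin n} :
    (L * R) i j = 0 ↔ ∀ k, contrib L R k i j = 0 := by
  rw [LR_apply]
  rw [Finset.sum_eq_zero_iff]
  simp

lemma block_disjoint
    (hU : ∀ k k' : Fin r, contrib L R k = contrib L R k' ∨
      ∀ i j, contrib L R k i j = 0 ∨ contrib L R k' i j = 0)
    {k k' : Fin r} (hne : Pcls L R k ≠ Pcls L R k') {i : Fin m} {j : Fin n}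
    (h1 : i ∈ rowSupp L R (Pcls L R k)) (h2 : j ∈ colSupp L R (Pcls L R k))
    (h3 : i ∈ rowSupp L R (Pcls L R k')) (h4 : j ∈ colSupp L R (Pcls L R k')) : False := by
  rcases hU k k' with h | h
  · exact hne (Pcls_eq_of h.symm ▸ rfl)
  · rcases h i j with h0 | h0
    · exact (key_iff.mpr ⟨h1, h2⟩) h0
    · exact (key_iff.mpr ⟨h3, h4⟩) h0

lemma classes_disjoint {Q Q' : Finset (Fin r)} (hQ : Q ∈ classes L R) (hQ' : Q' ∈ classes L R)
    (hne : Q ≠ Q') {k : Fin r} (h1 : k ∈ Q) (h2 : k ∈ Q') : False := by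
  obtain ⟨a, rfl⟩ := mem_classes_iff.mp hQ
  obtain ⟨b, rfl⟩ := mem_classes_iff.mp hQ'
  exact hne ((Pcls_eq_of_mem h1).symm.trans (Pcls_eq_of_mem h2))

open scoped Classical in
lemma frobSq_split
    (hU : ∀ k k' : Fin r, contrib L R k = contrib L R k' ∨
      ∀ i j, contrib L R k i j = 0 ∨ contrib L R k' i j = 0)
    (A Z : Matrix (Fin m) (Fin n) ℂ) (hZ : ∀ i j, (L * R) i j = 0 → Z i j = 0) :
    frobSq (A - Z) =
      (∑ P ∈ classes L R,
        frobSq (subm A (rowSupp L R P) (colSupp L R P) - subm Z (rowSupp L R P) (colSupp L R P)))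
      + ∑ i, ∑ j, if (L * R) i j = 0 then ‖A i j‖ ^ 2 else 0 := by
  classical
  have hfr : frobSq (A - Z) = ∑ x : Fin m × Fin n, ‖(A - Z) x.1 x.2‖ ^ 2 := by
    rw [Fintype.sum_prod_type]; rfl
  have htail : (∑ i, ∑ j, if (L * R) i j = 0 then ‖A i j‖ ^ 2 else 0)
      = ∑ x ∈ Finset.univ.filter (fun x : Fin m × Fin n => ¬ (L * R) x.1 x.2 ≠ 0),
          ‖(A - Z) x.1 x.2‖ ^ 2 := by
    rw [Finset.sum_filter, Fintype.sum_prod_type]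
    refine Finset.sum_congr rfl fun i _ => Finset.sum_congr rfl fun j _ => ?_
    set x : Fin m × Fin n := (i, j) with hx
    show (if (L * R) x.1 x.2 = 0 then ‖A x.1 x.2‖ ^ 2 else 0) = _
    by_cases h : (L * R) x.1 x.2 = 0
    · simp only [h, not_true_eq_false, ne_eq, not_not, if_pos h, if_true]
      rw [Matrix.sub_apply, hZ _ _ h, sub_zero]
      simp [h]
    · simp [h]
  have hT : Finset.univ.filter (fun x : Fin m × Fin n => (L * R) x.1 x.2 ≠ 0)
      = (classes L R).biUnion (fun P => rowSupp L R P ×ˢ colSupp L R P) := by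
    ext x
    simp only [Finset.mem_filter, Finset.mem_univ, true_and, Finset.mem_biUnion,
      Finset.mem_product]
    constructor
    · intro h
      have : ∃ k, contrib L R k x.1 x.2 ≠ 0 := by
        by_contra hc
        push_neg at hc
        exact h (LR_eq_zero_iff.mpr hc)
      obtain ⟨k, hk⟩ := this
      exact ⟨Pcls L R k, mem_classes_iff.mpr ⟨k, rfl⟩, key_iff.mp hk⟩
    · rintro ⟨P, hP, h1, h2⟩
      obtain ⟨k, rfl⟩ := mem_classes_iff.mp hP
      intro h0
      exact key_iff.mpr ⟨h1, h2⟩ ((LR_eq_zero_iff.mp h0) k)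
  have hdisj : (↑(classes L R) : Set (Finset (Fin r))).PairwiseDisjoint
      (fun P => rowSupp L R P ×ˢ colSupp L R P) := by
    intro P hP Q hQ hne
    simp only [Function.onFun]
    rw [Finset.disjoint_left]
    rintro x hx hx'
    rw [Finset.mem_product] at hx hx'
    obtain ⟨a, rfl⟩ := mem_classes_iff.mp hP
    obtain ⟨b, rfl⟩ := mem_classes_iff.mp hQ
    exact block_disjoint hU hne hx.1 hx.2 hx'.1 hx'.2
  have hblocks : ∀ P ∈ classes L R,
      (∑ x ∈ rowSupp L R P ×ˢ colSupp L R P, ‖(A - Z) x.1 x.2‖ ^ 2)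
      = frobSq (subm A (rowSupp L R P) (colSupp L R P)
          - subm Z (rowSupp L R P) (colSupp L R P)) := by
    intro P _
    rw [Finset.sum_product]
    unfold frobSq
    rw [← Finset.sum_coe_sort (rowSupp L R P)]
    apply Finset.sum_congr rfl
    intro i _
    rw [← Finset.sum_coe_sort (colSupp L R P)]
    apply Finset.sum_congr rfl
    intro j _
    simp [subm, Matrix.sub_apply]
  calc frobSq (A - Z) = ∑ x : Fin m × Fin n, ‖(A - Z) x.1 x.2‖ ^ 2 := hfr
    _ = (∑ x ∈ Finset.univ.filter (fun x : Fin m × Fin n => (L * R) x.1 x.2 ≠ 0),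
          ‖(A - Z) x.1 x.2‖ ^ 2)
        + ∑ x ∈ Finset.univ.filter (fun x : Fin m × Fin n => ¬ (L * R) x.1 x.2 ≠ 0),
          ‖(A - Z) x.1 x.2‖ ^ 2 :=
        (Finset.sum_filter_add_sum_filter_not _ _ _).symm
    _ = _ := by
        rw [htail, hT, Finset.sum_biUnion hdisj]
        congr 1
        exact Finset.sum_congr rfl hblocks

/-- **Theorem (tractable two-factor fixed-support matrix factorization).**
If the rank-one contribution supports of `(L, R)` are pairwise identical or disjoint,
then the squared-Frobenius approximation error of fixed-support factorization is equal to
the sum over the equivalence classes of the best low-rank approximation errors of the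
corresponding blocks plus the energy of `A` outside `supp(L·R)`; moreover the infimum
is attained. -/
theorem fsmf_tractable {m r n : ℕ} (A : Matrix (Fin m) (Fin n) ℂ)
    (L : Matrix (Fin m) (Fin r) ℕ) (R : Matrix (Fin r) (Fin n) ℕ)
    (hL : ∀ i k, L i k = 0 ∨ L i k = 1) (hR : ∀ k j, R k j = 0 ∨ R k j = 1)
    (hU : ∀ k k' : Fin r, contrib L R k = contrib L R k' ∨
      ∀ i j, contrib L R k i j = 0 ∨ contrib L R k' i j = 0) :
    IsLeast
      { e : ℝ | ∃ (X : Matrix (Fin m) (Fin r) ℂ) (Y : Matrix (Fin r) (Fin n) ℂ),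
          (∀ i k, L i k = 0 → X i k = 0) ∧ (∀ k j, R k j = 0 → Y k j = 0) ∧
          e = frobSq (A - X * Y) }
      ((∑ P ∈ classes L R,
          sInf { e : ℝ | ∃ B : Matrix (rowSupp L R P) (colSupp L R P) ℂ,
            B.rank ≤ P.card ∧ e = frobSq (subm A (rowSupp L R P) (colSupp L R P) - B) }) +
        ∑ i, ∑ j, if (L * R) i j = 0 then ‖A i j‖ ^ 2 else 0) := by
  classical
  -- best low-rank approximation for each class
  have hbest : ∀ P : Finset (Fin r), IsLeast
      { e : ℝ | ∃ B : Matrix (rowSupp L R P) (colSupp L R P) ℂ,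
          B.rank ≤ P.card ∧ e = frobSq (subm A (rowSupp L R P) (colSupp L R P) - B) }
      (sInf { e : ℝ | ∃ B : Matrix (rowSupp L R P) (colSupp L R P) ℂ,
          B.rank ≤ P.card ∧ e = frobSq (subm A (rowSupp L R P) (colSupp L R P) - B) }) := by
    intro P
    obtain ⟨B, hB, hle⟩ :=
      exists_best_rank_approx (subm A (rowSupp L R P) (colSupp L R P)) P.card
    rw [hle.csInf_eq]
    exact hle
  -- feasibility implies vanishing outside the support of L*R
  have hXYsupp : ∀ (X : Matrix (Fin m) (Fin r) ℂ) (Y : Matrix (Fin r) (Fin n) ℂ),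
      (∀ i k, L i k = 0 → X i k = 0) → (∀ k j, R k j = 0 → Y k j = 0) →
      ∀ i j, (L * R) i j = 0 → (X * Y) i j = 0 := by
    intro X Y hX hY i j h0
    rw [Matrix.mul_apply]
    apply Finset.sum_eq_zero
    intro k _
    have hk := LR_eq_zero_iff.mp h0 k
    simp only [contrib, Matrix.of_apply, Nat.mul_eq_zero] at hk
    rcases hk with h | h
    · rw [hX i k h, zero_mul]
    · rw [hY k j h, mul_zero]
  constructor
  · -- membership : the value is attained
    have h1 := fun P : Finset (Fin r) => (hbest P).1
    choose BP hBPrank hBPval using h1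
    have h2 := fun P : Finset (Fin r) => rank_factor (BP P) P.card (hBPrank P)
    choose CP DP hCb hDb hCD using h2
    set XP : Finset (Fin r) → Matrix (Fin m) (Fin r) ℂ := fun P =>
      Matrix.of fun i k => if h : i ∈ rowSupp L R P ∧ k ∈ P
        then CP P ⟨i, h.1⟩ (P.equivFin ⟨k, h.2⟩) else 0 with hXPdef
    set YP : Finset (Fin r) → Matrix (Fin r) (Fin n) ℂ := fun P =>
      Matrix.of fun k j => if h : k ∈ P ∧ j ∈ colSupp L R P
        then DP P (P.equivFin ⟨k, h.1⟩) ⟨j, h.2⟩ else 0 with hYPdef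
    set X : Matrix (Fin m) (Fin r) ℂ := ∑ P ∈ classes L R, XP P with hXdef
    set Y : Matrix (Fin r) (Fin n) ℂ := ∑ P ∈ classes L R, YP P with hYdef
    have hXsupp : ∀ i k, L i k = 0 → X i k = 0 := by
      intro i k hL0
      rw [hXdef, Matrix.sum_apply]
      apply Finset.sum_eq_zero
      intro P hP
      rw [hXPdef]
      simp only [Matrix.of_apply]
      rw [dif_neg]
      rintro ⟨h1, h2⟩
      obtain ⟨k0, rfl⟩ := mem_classes_iff.mp hP
      exact rowSupp_L_ne ((Pcls_eq_of_mem h2) ▸ h1) hL0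
    have hYsupp : ∀ k j, R k j = 0 → Y k j = 0 := by
      intro k j hR0
      rw [hYdef, Matrix.sum_apply]
      apply Finset.sum_eq_zero
      intro P hP
      rw [hYPdef]
      simp only [Matrix.of_apply]
      rw [dif_neg]
      rintro ⟨h1, h2⟩
      obtain ⟨k0, rfl⟩ := mem_classes_iff.mp hP
      exact colSupp_R_ne ((Pcls_eq_of_mem h1) ▸ h2) hR0
    have hXY : X * Y = ∑ P ∈ classes L R, XP P * YP P := by
      rw [hXdef, hYdef, Matrix.sum_mul]
      apply Finset.sum_congr rfl
      intro P hP
      rw [Matrix.mul_sum]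
      rw [Finset.sum_eq_single_of_mem P hP]
      intro Q hQ hne
      ext i j
      rw [Matrix.mul_apply, Matrix.zero_apply]
      apply Finset.sum_eq_zero
      intro k _
      rw [hXPdef, hYPdef]
      simp only [Matrix.of_apply]
      by_cases h1 : i ∈ rowSupp L R P ∧ k ∈ P
      · by_cases h2 : k ∈ Q ∧ j ∈ colSupp L R Q
        · exact (classes_disjoint hQ hP hne h2.1 h1.2).elim
        · rw [dif_neg h2, mul_zero]
      · rw [dif_neg h1, zero_mul]
    have hZblock : ∀ P ∈ classes L R,
        subm (X * Y) (rowSupp L R P) (colSupp L R P) = BP P := by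
      intro P hP
      ext i j
      show (X * Y) i.1 j.1 = BP P i j
      rw [hXY, Matrix.sum_apply]
      rw [Finset.sum_eq_single_of_mem P hP (by
        intro Q hQ hne
        rw [Matrix.mul_apply]
        apply Finset.sum_eq_zero
        intro k _
        rw [hXPdef, hYPdef]
        simp only [Matrix.of_apply]
        by_cases h1 : i.1 ∈ rowSupp L R Q ∧ k ∈ Q
        · by_cases h2 : k ∈ Q ∧ j.1 ∈ colSupp L R Q
          · exfalso
            obtain ⟨a, ha⟩ := mem_classes_iff.mp hP
            obtain ⟨b, hb⟩ := mem_classes_iff.mp hQ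
            refine block_disjoint hU (k := b) (k' := a) (i := i.1) (j := j.1) ?_ ?_ ?_ ?_ ?_
            · rw [ha, hb]; exact fun hc => hne (hc ▸ rfl)
            · rw [hb]; exact h1.1
            · rw [hb]; exact h2.2
            · rw [ha]; exact i.2
            · rw [ha]; exact j.2
          · rw [dif_neg h2, mul_zero]
        · rw [dif_neg h1, zero_mul])]
      rw [Matrix.mul_apply]
      rw [← Finset.sum_subset (Finset.subset_univ P) (by
        intro k _ hk
        rw [hXPdef]
        simp only [Matrix.of_apply]
        rw [dif_neg (fun hc => hk hc.2), zero_mul])]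
      have hterm : ∀ k (hk : k ∈ P), XP P i.1 k * YP P k j.1
          = CP P i (P.equivFin ⟨k, hk⟩) * DP P (P.equivFin ⟨k, hk⟩) j := by
        intro k hk
        rw [hXPdef, hYPdef]
        simp only [Matrix.of_apply]
        rw [dif_pos ⟨i.2, hk⟩, dif_pos ⟨hk, j.2⟩]
      rw [← Finset.sum_attach P (fun k => XP P i.1 k * YP P k j.1)]
      rw [Finset.sum_congr rfl (fun k _ => hterm k.1 k.2)]
      have : ∀ k : {x // x ∈ P}, (⟨k.1, k.2⟩ : {x // x ∈ P}) = k := fun k => rfl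
      rw [Finset.sum_congr rfl (fun k _ => by rw [this k])]
      rw [← Finset.univ_eq_attach]
      rw [Equiv.sum_comp P.equivFin (fun t => CP P i t * DP P t j)]
      rw [← Matrix.mul_apply, hCD P]
    refine ⟨X, Y, hXsupp, hYsupp, ?_⟩
    rw [frobSq_split hU A (X * Y) (hXYsupp X Y hXsupp hYsupp)]
    congr 1
    apply Finset.sum_congr rfl
    intro P hP
    rw [hZblock P hP]
    exact hBPval P
  · -- lower bound
    rintro e ⟨X, Y, hX, hY, rfl⟩
    rw [frobSq_split hU A (X * Y) (hXYsupp X Y hX hY)]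
    apply add_le_add_left
    apply Finset.sum_le_sum
    intro P hP
    have hsub : subm (X * Y) (rowSupp L R P) (colSupp L R P)
        = (Matrix.of fun (i : rowSupp L R P) (k : P) => X i.1 k.1)
          * (Matrix.of fun (k : P) (j : colSupp L R P) => Y k.1 j.1) := by
      obtain ⟨k0, rfl⟩ := mem_classes_iff.mp hP
      ext i j
      show (X * Y) i.1 j.1 = _
      rw [Matrix.mul_apply, Matrix.mul_apply]
      rw [← Finset.sum_subset (Finset.subset_univ (Pcls L R k0)) (by
        intro k _ hk
        by_cases hc : contrib L R k i.1 j.1 = 0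
        · simp only [contrib, Matrix.of_apply, Nat.mul_eq_zero] at hc
          rcases hc with h | h
          · rw [hX i.1 k h, zero_mul]
          · rw [hY k j.1 h, mul_zero]
        · exfalso
          obtain ⟨hri, hcj⟩ := key_iff.mp hc
          by_cases heq : Pcls L R k = Pcls L R k0
          · exact hk (heq ▸ self_mem_Pcls k)
          · exact block_disjoint hU heq hri hcj i.2 j.2)]
      rw [← Finset.sum_attach (Pcls L R k0) (fun k => X i.1 k * Y k j.1)]
      rw [← Finset.univ_eq_attach]
      rfl
    refine (hbest P).2 ⟨subm (X * Y) (rowSupp L R P) (colSupp L R P), ?_, rfl⟩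
    rw [hsub]
    refine le_trans (Matrix.rank_mul_le_right _ _) ?_
    refine le_trans (Matrix.rank_le_card_height _) ?_
    rw [Fintype.card_coe]
end

section
/- Let π₁ = (a₁, b₁, c₁, d₁) and π₂ = (a₂, b₂, c₂, d₂) be any two patterns with a₁c₁d₁ = a₂b₂d₂ (no chainability is assumed). Then the rank-one contribution supports U_1, …, U_q (with q = a₁c₁d₁) of the pair of binary support matrices (S_{π₁}, S_{π₂}) are pairwise either identical or disjoint. -/
/-- A *pattern* is a tuple `(a, b, c, d)` of (positive) natural numbers. -/
structure Pattern where
  a : ℕ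
  b : ℕ
  c : ℕ
  d : ℕ

namespace Pattern

/-- The entries of a pattern are positive integers. -/
def Pos (π : Pattern) : Prop := 0 < π.a ∧ 0 < π.b ∧ 0 < π.c ∧ 0 < π.d

/-- Number of rows `a*b*d` of a `π`-factor. -/
def rows (π : Pattern) : ℕ := π.a * π.b * π.d

/-- Number of columns `a*c*d` of a `π`-factor. -/
def cols (π : Pattern) : ℕ := π.a * π.c * π.d

/-- `r(π₁, π₂) = a₁c₁/a₂ (= b₂d₂/d₁)`. -/
def rk (π₁ π₂ : Pattern) : ℕ := π₁.a * π₁.c / π₂.a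

/-- A pair of patterns is *chainable* if `a₁c₁/a₂ = b₂d₂/d₁` is a positive integer,
`a₁ ∣ a₂` and `d₂ ∣ d₁`. -/
def Chainable (π₁ π₂ : Pattern) : Prop :=
  π₂.a ∣ π₁.a * π₁.c ∧ π₁.d ∣ π₂.b * π₂.d ∧
    π₁.a * π₁.c / π₂.a = π₂.b * π₂.d / π₁.d ∧
    0 < π₁.a * π₁.c / π₂.a ∧ π₁.a ∣ π₂.a ∧ π₂.d ∣ π₁.d

/-- `π₁ * π₂ := (a₁, b₁d₁/d₂, a₂c₂/a₁, d₂)`. -/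
instance : Mul Pattern :=
  ⟨fun π₁ π₂ => ⟨π₁.a, π₁.b * π₁.d / π₂.d, π₂.a * π₂.c / π₁.a, π₂.d⟩⟩

/-- `‖π‖₀ := a*b*c*d`. -/
def norm0 (π : Pattern) : ℕ := π.a * π.b * π.c * π.d

end Pattern

open scoped Kronecker

/-- The flattening equivalence `(Fin a × Fin b) × Fin d ≃ Fin (a*b*d)`. -/
def kron3Equiv (a b d : ℕ) : (Fin a × Fin b) × Fin d ≃ Fin (a * b * d) :=
  (finProdFinEquiv.prodCongr (Equiv.refl (Fin d))).trans finProdFinEquiv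

/-- The support matrix `S_π = I_a ⊗ 1_{b×c} ⊗ I_d ∈ {0,1}^{abd × acd}`. -/
def Pattern.S (π : Pattern) : Matrix (Fin π.rows) (Fin π.cols) ℕ :=
  Matrix.reindex (kron3Equiv π.a π.b π.d) (kron3Equiv π.a π.c π.d)
    ((1 : Matrix (Fin π.a) (Fin π.a) ℕ) ⊗ₖ
      (Matrix.of fun _ _ => (1 : ℕ) : Matrix (Fin π.b) (Fin π.c) ℕ) ⊗ₖ
      (1 : Matrix (Fin π.d) (Fin π.d) ℕ))

/-- Reindexing a matrix along equalities of dimensions. -/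
def castMat {α : Type*} {m n m' n' : ℕ} (hm : m = m') (hn : n = n')
    (A : Matrix (Fin m) (Fin n) α) : Matrix (Fin m') (Fin n') α :=
  Matrix.of fun i j => A (Fin.cast hm.symm i) (Fin.cast hn.symm j)

/-- Entrywise formula for the support matrix. -/
lemma S_apply' (π : Pattern) (i : Fin π.rows) (j : Fin π.cols) :
    π.S i j =
      if ((kron3Equiv π.a π.b π.d).symm i).1.1 = ((kron3Equiv π.a π.c π.d).symm j).1.1
          ∧ ((kron3Equiv π.a π.b π.d).symm i).2 = ((kron3Equiv π.a π.c π.d).symm j).2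
        then 1 else 0 := by
  unfold Pattern.S
  rw [Matrix.reindex_apply]
  erw [Matrix.submatrix_apply]
  set p := (kron3Equiv π.a π.b π.d).symm i with hp
  set q := (kron3Equiv π.a π.c π.d).symm j with hq
  obtain ⟨⟨α, β⟩, δ⟩ := p
  obtain ⟨⟨α', γ⟩, δ'⟩ := q
  by_cases h1 : α = α' <;> by_cases h2 : δ = δ' <;>
    simp [Matrix.kronecker_apply, Matrix.one_apply, h1, h2]

/-- **Lemma.** For any two patterns `π₁, π₂` with `a₁c₁d₁ = a₂b₂d₂` (no chainability assumed),
the rank-one contribution supports of `(S_{π₁}, S_{π₂})` are pairwise identical or disjoint. -/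
theorem support_contribs_identical_or_disjoint (π₁ π₂ : Pattern)
    (h₁ : π₁.Pos) (h₂ : π₂.Pos) (hdim : π₁.cols = π₂.rows) :
    ∀ k k' : Fin π₁.cols,
      contrib π₁.S (castMat hdim.symm rfl π₂.S) k =
        contrib π₁.S (castMat hdim.symm rfl π₂.S) k' ∨
      ∀ i j, contrib π₁.S (castMat hdim.symm rfl π₂.S) k i j = 0 ∨
        contrib π₁.S (castMat hdim.symm rfl π₂.S) k' i j = 0 := by
  intro k k'
  set eC := (kron3Equiv π₁.a π₁.c π₁.d).symm with heC
  set eR := (kron3Equiv π₂.a π₂.b π₂.d).symm with heR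
  by_cases hc : (eC k).1.1 = (eC k').1.1 ∧ (eC k).2 = (eC k').2
  · by_cases hr : (eR (Fin.cast (m := π₂.rows) hdim k)).1.1 = (eR (Fin.cast (m := π₂.rows) hdim k')).1.1 ∧
        (eR (Fin.cast (m := π₂.rows) hdim k)).2 = (eR (Fin.cast (m := π₂.rows) hdim k')).2
    · left
      ext i j
      simp only [contrib, castMat, Matrix.of_apply, S_apply', ← heC, ← heR, hc.1, hc.2,
        hr.1, hr.2]
    · right
      intro i j
      by_contra hcon
      push_neg at hcon
      obtain ⟨h3, h4⟩ := hcon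
      simp only [contrib, castMat, Matrix.of_apply, S_apply', ← heC, ← heR] at h3 h4
      apply hr
      split_ifs at h3 h4 with p1 p2 p3 p4 <;> try omega
  · right
    intro i j
    by_contra hcon
    push_neg at hcon
    obtain ⟨h3, h4⟩ := hcon
    simp only [contrib, castMat, Matrix.of_apply, S_apply', ← heC, ← heR] at h3 h4
    apply hc
    split_ifs at h3 h4 with p1 p2 p3 p4 <;> try omega
end

section
/- Let π₁, π₂, π₃ be patterns such that (π₁, π₂) and (π₂, π₃) are chainable. Then: (1) (π₁, π₂ * π₃) and (π₁ * π₂, π₃) are chainable; (2) r(π₁, π₂ * π₃) = r(π₁, π₂) and r(π₁ * π₂, π₃) = r(π₂, π₃); (3) π₁ * (π₂ * π₃) = (π₁ * π₂) * π₃. -/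
/-- **Lemma (associativity of `*`).** If `(π₁, π₂)` and `(π₂, π₃)` are chainable then
`(π₁, π₂ * π₃)` and `(π₁ * π₂, π₃)` are chainable, `r(π₁, π₂*π₃) = r(π₁,π₂)`,
`r(π₁*π₂, π₃) = r(π₂,π₃)` and `π₁ * (π₂ * π₃) = (π₁ * π₂) * π₃`. -/
theorem pattern_mul_assoc (π₁ π₂ π₃ : Pattern)
    (h₁ : π₁.Pos) (h₂ : π₂.Pos) (h₃ : π₃.Pos)
    (h₁₂ : Pattern.Chainable π₁ π₂) (h₂₃ : Pattern.Chainable π₂ π₃) :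
    (Pattern.Chainable π₁ (π₂ * π₃) ∧ Pattern.Chainable (π₁ * π₂) π₃) ∧
    (Pattern.rk π₁ (π₂ * π₃) = Pattern.rk π₁ π₂ ∧
      Pattern.rk (π₁ * π₂) π₃ = Pattern.rk π₂ π₃) ∧
    π₁ * (π₂ * π₃) = (π₁ * π₂) * π₃ := by
  obtain ⟨ha12, hd12, he12, hp12, haa12, hdd12⟩ := h₁₂
  obtain ⟨ha23, hd23, he23, hp23, haa23, hdd23⟩ := h₂₃
  have hmul : ∀ p q : Pattern,
      p * q = ⟨p.a, p.b * p.d / q.d, q.a * q.c / p.a, q.d⟩ := fun _ _ => rfl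
  have key1 : π₂.b * π₂.d / π₃.d * π₃.d = π₂.b * π₂.d :=
    Nat.div_mul_cancel (hdd23.mul_left π₂.b)
  have key2 : π₁.a * (π₂.a * π₂.c / π₁.a) = π₂.a * π₂.c :=
    Nat.mul_div_cancel' (haa12.mul_right π₂.c)
  have key3 : π₁.b * π₁.d / π₂.d * π₂.d = π₁.b * π₁.d :=
    Nat.div_mul_cancel (hdd12.mul_left π₁.b)
  have key4 : π₂.a * (π₃.a * π₃.c / π₂.a) = π₃.a * π₃.c :=
    Nat.mul_div_cancel' (haa23.mul_right π₃.c)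
  refine ⟨⟨⟨ha12, ?_, ?_, hp12, haa12, hdd23.trans hdd12⟩,
    ⟨?_, hd23, ?_, ?_, haa12.trans haa23, hdd23⟩⟩, ⟨rfl, ?_⟩, ?_⟩
  · show π₁.d ∣ π₂.b * π₂.d / π₃.d * π₃.d
    rw [key1]; exact hd12
  · show π₁.a * π₁.c / π₂.a = π₂.b * π₂.d / π₃.d * π₃.d / π₁.d
    rw [key1]; exact he12
  · show π₃.a ∣ π₁.a * (π₂.a * π₂.c / π₁.a)
    rw [key2]; exact ha23
  · show π₁.a * (π₂.a * π₂.c / π₁.a) / π₃.a = π₃.b * π₃.d / π₂.d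
    rw [key2]; exact he23
  · show 0 < π₁.a * (π₂.a * π₂.c / π₁.a) / π₃.a
    rw [key2]; exact hp23
  · show π₁.a * (π₂.a * π₂.c / π₁.a) / π₃.a = π₂.a * π₂.c / π₃.a
    rw [key2]
  · rw [hmul π₂ π₃, hmul π₁ π₂, hmul, hmul]
    simp only [Pattern.mk.injEq, key3, key4, and_self, true_and, and_true]
end

section
/- Let β = (π_ℓ)_{ℓ=1}^L with π_ℓ = (a_ℓ, b_ℓ, c_ℓ, d_ℓ) be a chainable architecture of depth L ≥ 2. Then π₁ * ⋯ * π_L = (a₁, b₁d₁/d_L, a_Lc_L/a₁, d_L), and every product X₁⋯X_L with X_ℓ ∈ D^{π_ℓ} for each ℓ is a (π₁ * ⋯ * π_L)-factor; in particular B^β ⊆ D^{π₁ * ⋯ * π_L}. -/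
open scoped Kronecker

/-- The support matrix `S_π`, extended by zero to an `ℕ × ℕ`-indexed array. -/
def SpatN (π : Pattern) : ℕ → ℕ → ℕ := fun i j =>
  if h : i < π.rows ∧ j < π.cols then π.S ⟨i, h.1⟩ ⟨j, h.2⟩ else 0

/-- `X` is (the extension by zero of) a `π`-factor: it vanishes outside the support of `S_π`. -/
def IsFactorN (π : Pattern) (X : ℕ → ℕ → ℂ) : Prop :=
  ∀ i j, SpatN π i j = 0 → X i j = 0

/-- Product of matrices encoded as finitely supported `ℕ × ℕ`-indexed arrays. -/
noncomputable def nmul (f g : ℕ → ℕ → ℂ) : ℕ → ℕ → ℂ := fun i j => ∑' k, f i k * g k j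

/-- `nprod X k = X 0 * X 1 * ⋯ * X k`. -/
noncomputable def nprod (X : ℕ → ℕ → ℕ → ℂ) : ℕ → ℕ → ℕ → ℂ
  | 0 => X 0
  | k + 1 => nmul (nprod X k) (X (k + 1))

/-- Frobenius norm. -/
noncomputable def nfrob (f : ℕ → ℕ → ℂ) : ℝ := Real.sqrt (∑' i, ∑' j, ‖f i j‖ ^ 2)

/-- `A` is (the extension by zero of) a matrix of size `m × n`. -/
def SuppIn (m n : ℕ) (A : ℕ → ℕ → ℂ) : Prop := ∀ i j, A i j ≠ 0 → i < m ∧ j < n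

/-- Partial products of patterns: `pprod π q k = π q * π (q+1) * ⋯ * π (q+k)`. -/
def pprod (π : ℕ → Pattern) (q : ℕ) : ℕ → Pattern
  | 0 => π q
  | k + 1 => pprod π q k * π (q + k + 1)

lemma spatN_ne_zero (π : Pattern) (i j : ℕ) :
    SpatN π i j ≠ 0 ↔ i < π.rows ∧ j < π.cols ∧ i % π.d = j % π.d ∧
      i / π.d / π.b = j / π.d / π.c := by
  unfold SpatN
  split
  · rename_i h
    dsimp only [Pattern.rows, Pattern.cols] at h ⊢
    simp only [Pattern.S, kron3Equiv, Matrix.reindex_apply, Equiv.symm_trans_apply,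
      Equiv.prodCongr_symm, Equiv.refl_symm, Equiv.prodCongr_apply, Equiv.coe_refl,
      finProdFinEquiv_symm_apply, Prod.map, Matrix.submatrix_apply,
      Matrix.kroneckerMap_apply, Matrix.one_apply, Fin.divNat, Fin.modNat, Fin.ext_iff]
    simp [h, Fin.ext_iff, ite_and, Nat.mul_eq_zero]
  · simp_all

lemma pattern_mul_def (π₁ π₂ : Pattern) :
    π₁ * π₂ = ⟨π₁.a, π₁.b * π₁.d / π₂.d, π₂.a * π₂.c / π₁.a, π₂.d⟩ := rfl

namespace Pattern

lemma cd_eq {π₁ π₂ : Pattern} (h : Chainable π₁ π₂) (h1 : π₁.Pos) :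
    π₁.c * π₁.d = (π₂.a / π₁.a) * (π₂.b * π₂.d) := by
  obtain ⟨hd1, hd2, heq, hpos, haa, hdd⟩ := h
  have ha0 : 0 < π₁.a := h1.1
  have hr : π₂.a * (π₁.a * π₁.c / π₂.a) = π₁.a * π₁.c := Nat.mul_div_cancel' hd1
  have hr2 : (π₂.b * π₂.d / π₁.d) * π₁.d = π₂.b * π₂.d := Nat.div_mul_cancel hd2
  have he : π₁.a * (π₂.a / π₁.a) = π₂.a := Nat.mul_div_cancel' haa
  apply Nat.eq_of_mul_eq_mul_left ha0
  calc π₁.a * (π₁.c * π₁.d) = π₁.a * π₁.c * π₁.d := by ring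
    _ = π₂.a * (π₁.a * π₁.c / π₂.a) * π₁.d := by rw [hr]
    _ = π₂.a * ((π₂.b * π₂.d / π₁.d) * π₁.d) := by rw [heq]; ring
    _ = π₂.a * (π₂.b * π₂.d) := by rw [hr2]
    _ = π₁.a * ((π₂.a / π₁.a) * (π₂.b * π₂.d)) := by conv_lhs => rw [← he]
                                                     ring

lemma mul_c_eq {π₁ π₂ : Pattern} (h : Chainable π₁ π₂) (h1 : π₁.Pos) :
    (π₁ * π₂).c = (π₂.a / π₁.a) * π₂.c := by
  obtain ⟨_, _, _, _, haa, _⟩ := h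
  have he : π₁.a * (π₂.a / π₁.a) = π₂.a := Nat.mul_div_cancel' haa
  show π₂.a * π₂.c / π₁.a = _
  conv_lhs => rw [← he]
  rw [mul_assoc, Nat.mul_div_cancel_left _ h1.1]

lemma mul_pos {π₁ π₂ : Pattern} (h : Chainable π₁ π₂) (h1 : π₁.Pos) (h2 : π₂.Pos) :
    (π₁ * π₂).Pos := by
  obtain ⟨hd1, hd2, heq, hpos, haa, hdd⟩ := h
  refine ⟨h1.1, ?_, ?_, h2.2.2.2⟩
  · exact Nat.div_pos (Nat.le_of_dvd (Nat.mul_pos h1.2.1 h1.2.2.2)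
      (hdd.trans (dvd_mul_left _ _))) h2.2.2.2
  · exact Nat.div_pos (Nat.le_of_dvd (Nat.mul_pos h2.1 h2.2.2.1)
      (haa.trans (dvd_mul_right _ _))) h1.1

lemma mul_rows {π₁ π₂ : Pattern} (h : Chainable π₁ π₂) (h1 : π₁.Pos) :
    (π₁ * π₂).rows = π₁.rows := by
  obtain ⟨hd1, hd2, heq, hpos, haa, hdd⟩ := h
  show π₁.a * (π₁.b * π₁.d / π₂.d) * π₂.d = π₁.a * π₁.b * π₁.d
  have : π₂.d ∣ π₁.b * π₁.d := hdd.trans (dvd_mul_left _ _)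
  rw [mul_assoc, Nat.div_mul_cancel this, mul_assoc]

lemma mul_cols {π₁ π₂ : Pattern} (h : Chainable π₁ π₂) (h1 : π₁.Pos) :
    (π₁ * π₂).cols = π₂.cols := by
  have hc := mul_c_eq h h1
  obtain ⟨hd1, hd2, heq, hpos, haa, hdd⟩ := h
  have he : π₁.a * (π₂.a / π₁.a) = π₂.a := Nat.mul_div_cancel' haa
  show π₁.a * (π₁ * π₂).c * π₂.d = π₂.a * π₂.c * π₂.d
  rw [hc, ← mul_assoc, he]

end Pattern

lemma factor_mul {π₁ π₂ : Pattern} (h : Pattern.Chainable π₁ π₂) (h1 : π₁.Pos)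
    (h2 : π₂.Pos) {X Y : ℕ → ℕ → ℂ} (hX : IsFactorN π₁ X) (hY : IsFactorN π₂ Y) :
    IsFactorN (π₁ * π₂) (nmul X Y) := by
  intro i j hS
  have key : ∀ k, X i k * Y k j = 0 := by
    intro k
    by_contra hk
    have hx : X i k ≠ 0 := fun hz => hk (by rw [hz, zero_mul])
    have hy : Y k j ≠ 0 := fun hz => hk (by rw [hz, mul_zero])
    have c1 : SpatN π₁ i k ≠ 0 := fun hz => hx (hX i k hz)
    have c2 : SpatN π₂ k j ≠ 0 := fun hz => hy (hY k j hz)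
    rw [spatN_ne_zero] at c1 c2
    obtain ⟨hi1, hk1, hm1, hq1⟩ := c1
    obtain ⟨hk2, hj2, hm2, hq2⟩ := c2
    have hdd : π₂.d ∣ π₁.d := h.2.2.2.2.2
    have hbdvd : π₂.d ∣ π₁.b * π₁.d := hdd.trans (dvd_mul_left _ _)
    refine absurd hS ((spatN_ne_zero (π₁ * π₂) i j).mpr ⟨?_, ?_, ?_, ?_⟩)
    · rw [Pattern.mul_rows h h1]; exact hi1
    · rw [Pattern.mul_cols h h1]; exact hj2
    · show i % π₂.d = j % π₂.d
      rw [← Nat.mod_mod_of_dvd i hdd, hm1, Nat.mod_mod_of_dvd k hdd, hm2]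
    · show i / π₂.d / (π₁.b * π₁.d / π₂.d) = j / π₂.d / (π₁ * π₂).c
      rw [Pattern.mul_c_eq h h1]
      calc i / π₂.d / (π₁.b * π₁.d / π₂.d)
          = i / (π₂.d * (π₁.b * π₁.d / π₂.d)) := Nat.div_div_eq_div_mul _ _ _
        _ = i / (π₁.b * π₁.d) := by rw [Nat.mul_div_cancel' hbdvd]
        _ = i / π₁.d / π₁.b := by rw [Nat.div_div_eq_div_mul, mul_comm]
        _ = k / π₁.d / π₁.c := hq1
        _ = k / (π₁.c * π₁.d) := by rw [Nat.div_div_eq_div_mul, mul_comm]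
        _ = k / (π₂.d * π₂.b * (π₂.a / π₁.a)) := by
            rw [Pattern.cd_eq h h1,
              show (π₂.a/π₁.a)*(π₂.b*π₂.d) = π₂.d*π₂.b*(π₂.a/π₁.a) from by ring]
        _ = k / π₂.d / π₂.b / (π₂.a / π₁.a) := by
            rw [Nat.div_div_eq_div_mul, Nat.div_div_eq_div_mul, mul_assoc]
        _ = j / π₂.d / π₂.c / (π₂.a / π₁.a) := by rw [hq2]
        _ = j / π₂.d / ((π₂.a / π₁.a) * π₂.c) := by
            rw [Nat.div_div_eq_div_mul, Nat.div_div_eq_div_mul, Nat.div_div_eq_div_mul,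
              mul_comm π₂.c (π₂.a / π₁.a)]
  unfold nmul
  rw [show (fun k => X i k * Y k j) = fun _ => (0:ℂ) from funext key, tsum_zero]

lemma main_ind (L : ℕ) (π : ℕ → Pattern) (hPos : ∀ ℓ < L, (π ℓ).Pos)
    (hch : ∀ ℓ, ℓ + 1 < L → Pattern.Chainable (π ℓ) (π (ℓ + 1))) :
    ∀ k, k < L →
      pprod π 0 k = ⟨(π 0).a, (π 0).b * (π 0).d / (π k).d,
        (π k).a * (π k).c / (π 0).a, (π k).d⟩ ∧
      (π 0).a ∣ (π k).a ∧ (π k).d ∣ (π 0).d ∧ (pprod π 0 k).Pos ∧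
      ∀ X : ℕ → ℕ → ℕ → ℂ, (∀ ℓ ≤ k, IsFactorN (π ℓ) (X ℓ)) →
        IsFactorN (pprod π 0 k) (nprod X k) := by
  intro k
  induction k with
  | zero =>
    intro hk
    have h0 := hPos 0 hk
    constructor
    · show π 0 = _
      rw [Nat.mul_div_cancel _ h0.2.2.2, Nat.mul_div_cancel_left _ h0.1]
    · exact ⟨dvd_refl _, dvd_refl _, h0, fun X hX => hX 0 le_rfl⟩
  | succ k ih =>
    intro hk
    have hkL : k < L := Nat.lt_of_succ_lt hk
    obtain ⟨hform, hadvd, hddvd, hpos, hfac⟩ := ih hkL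
    have hchk := hch k hk
    have hpk1 := hPos (k + 1) hk
    have hσa : (pprod π 0 k).a = (π 0).a := by rw [hform]
    have hσd : (pprod π 0 k).d = (π k).d := by rw [hform]
    have hσac : (pprod π 0 k).a * (pprod π 0 k).c = (π k).a * (π k).c := by
      rw [hform]
      show (π 0).a * ((π k).a * (π k).c / (π 0).a) = _
      exact Nat.mul_div_cancel' (hadvd.trans (dvd_mul_right _ _))
    have hchσ : Pattern.Chainable (pprod π 0 k) (π (k + 1)) := by
      obtain ⟨c1, c2, c3, c4, c5, c6⟩ := hchk
      rw [Pattern.Chainable, hσac, hσd, hσa]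
      exact ⟨c1, c2, c3, c4, hadvd.trans c5, c6⟩
    have hprod : pprod π 0 (k + 1) = pprod π 0 k * π (k + 1) := by
      simp only [pprod, Nat.zero_add]
    refine ⟨?_, hadvd.trans hchk.2.2.2.2.1, hchk.2.2.2.2.2.trans hddvd,
      hprod ▸ Pattern.mul_pos hchσ hpos hpk1, ?_⟩
    · rw [hprod, hform, pattern_mul_def]
      simp only [Pattern.mk.injEq, Nat.div_mul_cancel (hddvd.trans (dvd_mul_left _ _)),
        true_and, and_true, and_self]
    · intro X hX
      rw [hprod]
      exact factor_mul hchσ hpos hpk1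
        (hfac X fun ℓ hℓ => hX ℓ (le_trans hℓ (Nat.le_succ k)))
        (hX (k + 1) le_rfl)

/-- **Lemma.** For a chainable architecture `β = (π 0, …, π (L-1))` of depth `L ≥ 2`,
`π 0 * ⋯ * π (L-1) = (a₁, b₁d₁/d_L, a_Lc_L/a₁, d_L)`, and every product of `π ℓ`-factors is
a `(π 0 * ⋯ * π (L-1))`-factor. -/
theorem butterfly_subset_factor (L : ℕ) (hL : 2 ≤ L) (π : ℕ → Pattern)
    (hPos : ∀ ℓ < L, (π ℓ).Pos)
    (hch : ∀ ℓ, ℓ + 1 < L → Pattern.Chainable (π ℓ) (π (ℓ + 1))) :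
    pprod π 0 (L - 1) =
      ⟨(π 0).a, (π 0).b * (π 0).d / (π (L - 1)).d,
        (π (L - 1)).a * (π (L - 1)).c / (π 0).a, (π (L - 1)).d⟩ ∧
    ∀ X : ℕ → ℕ → ℕ → ℂ, (∀ ℓ < L, IsFactorN (π ℓ) (X ℓ)) →
      IsFactorN (pprod π 0 (L - 1)) (nprod X (L - 1)) := by
  obtain ⟨hform, _, _, _, hfac⟩ := main_ind L π hPos hch (L - 1) (by omega)
  exact ⟨hform, fun X hX => hfac X fun ℓ hℓ => hX ℓ (by omega)⟩
end
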